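/- Let (S(t)f)(x) := sup_{|y|≤t} f(x+y) on BUC(ℝ). A function f ∈ BUC(ℝ) belongs to the Lipschitz set D_L := {f : sup_{0<h≤h₀} ‖(S(h)f − f)/h‖_∞ < ∞ for some h₀ > 0} if and only if f is (globally) Lipschitz continuous. In particular D_L = D_L^s = Lip_b, the space of bounded Lipschitz functions. -/
import Mathlib


/-- The uncertain shift semigroup on `BUC(ℝ)`: `(S t f) x = sup_{|y| ≤ t} f (x + y)`. -/
noncomputable def US (t : ℝ) (f : ℝ → ℝ) (x : ℝ) : ℝ :=
  sSup {z : ℝ | ∃ y : ℝ, |y| ≤ t ∧ z = f (x + y)}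

/-- `f` belongs to the Lipschitz set `D_L` of the uncertain shift semigroup. -/
def memDL (f : ℝ → ℝ) : Prop :=
  ∃ h₀ > (0 : ℝ), ∃ K : ℝ, ∀ h : ℝ, 0 < h → h ≤ h₀ → ∀ x, |US h f x - f x| ≤ K * h

lemma lip_memDL (f : ℝ → ℝ) (K : ℝ)
    (hK : ∀ x y : ℝ, |f x - f y| ≤ K * |x - y|) : memDL f := by
  refine ⟨1, one_pos, max K 0, fun h hh hh1 x => ?_⟩
  have hub : ∀ z ∈ {z : ℝ | ∃ y : ℝ, |y| ≤ h ∧ z = f (x + y)}, z ≤ f x + max K 0 * h := by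
    rintro z ⟨y, hy, rfl⟩
    have h1 : |f (x + y) - f x| ≤ K * |x + y - x| := hK _ _
    have h2 : |x + y - x| = |y| := by ring_nf
    rw [h2] at h1
    have h3 : K * |y| ≤ max K 0 * h := by
      rcases le_or_gt 0 K with hk | hk
      · calc K * |y| ≤ K * h := by nlinarith
          _ ≤ max K 0 * h := by nlinarith [le_max_left K 0]
      · have : K * |y| ≤ 0 := mul_nonpos_of_nonpos_of_nonneg hk.le (abs_nonneg _)
        have : (0:ℝ) ≤ max K 0 * h := mul_nonneg (le_max_right K 0) hh.le
        linarith
    have := (abs_le.1 h1).2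
    linarith
  have hbdd : BddAbove {z : ℝ | ∃ y : ℝ, |y| ≤ h ∧ z = f (x + y)} := ⟨_, hub⟩
  have hmem : f x ∈ {z : ℝ | ∃ y : ℝ, |y| ≤ h ∧ z = f (x + y)} :=
    ⟨0, by simpa using hh.le, by simp⟩
  have hlo : f x ≤ US h f x := le_csSup hbdd hmem
  have hhi : US h f x ≤ f x + max K 0 * h := csSup_le ⟨f x, hmem⟩ hub
  rw [abs_le]
  constructor
  · have : (0:ℝ) ≤ max K 0 * h := mul_nonneg (le_max_right K 0) hh.le
    linarith
  · linarith

lemma memDL_lip (f : ℝ → ℝ) (C : ℝ) (hb : ∀ x, |f x| ≤ C) (hf : memDL f) :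
    ∃ K : ℝ, ∀ x y : ℝ, |f x - f y| ≤ K * |x - y| := by
  obtain ⟨h₀, hh₀, K, hK⟩ := hf
  have hC : 0 ≤ C := le_trans (abs_nonneg _) (hb 0)
  refine ⟨max K (2 * C / h₀), fun x y => ?_⟩
  -- local estimate
  have key : ∀ x y : ℝ, x ≠ y → |x - y| ≤ h₀ → f y - f x ≤ K * |x - y| := by
    intro x y hxy hle
    set h := |x - y| with hh
    have hpos : 0 < h := abs_pos.2 (sub_ne_zero.2 hxy)
    have hbdd : BddAbove {z : ℝ | ∃ y' : ℝ, |y'| ≤ h ∧ z = f (x + y')} := by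
      refine ⟨C, fun z hz => ?_⟩
      obtain ⟨y', _, rfl⟩ := hz
      exact (abs_le.1 (hb _)).2
    have hmem : f y ∈ {z : ℝ | ∃ y' : ℝ, |y'| ≤ h ∧ z = f (x + y')} :=
      ⟨y - x, by rw [hh, abs_sub_comm], by ring_nf⟩
    have h1 : f y ≤ US h f x := le_csSup hbdd hmem
    have h2 : |US h f x - f x| ≤ K * h := hK h hpos hle x
    have h3 := (abs_le.1 h2).2
    linarith
  rcases eq_or_ne x y with rfl | hxy
  · simp
  rcases le_or_gt |x - y| h₀ with hle | hgt
  · have hKle : K ≤ max K (2 * C / h₀) := le_max_left _ _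
    have ha := key x y hxy hle
    have hb' := key y x (Ne.symm hxy) (by rwa [abs_sub_comm])
    rw [abs_sub_comm y x] at hb'
    have habs : |f x - f y| ≤ K * |x - y| := abs_sub_le_iff.2 ⟨hb', ha⟩
    calc |f x - f y| ≤ K * |x - y| := habs
      _ ≤ max K (2 * C / h₀) * |x - y| :=
        mul_le_mul_of_nonneg_right hKle (abs_nonneg _)
  · have h2C : |f x - f y| ≤ 2 * C := by
      have h1 := abs_le.1 (hb x)
      have h2 := abs_le.1 (hb y)
      rw [abs_le]; constructor <;> linarith [h1.1, h1.2, h2.1, h2.2]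
    set D := 2 * C / h₀ with hD
    have hD0 : 0 ≤ D := div_nonneg (by linarith) hh₀.le
    have hDh : D * h₀ = 2 * C := by rw [hD]; field_simp
    have hDle : D ≤ max K D := le_max_right _ _
    have : 2 * C ≤ D * |x - y| := by nlinarith
    have : D * |x - y| ≤ max K D * |x - y| :=
      mul_le_mul_of_nonneg_right hDle (abs_nonneg _)
    linarith

/-- For the uncertain shift semigroup, a bounded uniformly continuous `f` belongs to the
Lipschitz set `D_L` iff it is Lipschitz; moreover `D_L = D_L^s`, i.e. `f ∈ D_L` iff
both `f ∈ D_L` and `-f ∈ D_L`. -/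
theorem stmt8 (f : ℝ → ℝ) (C : ℝ) (hb : ∀ x, |f x| ≤ C) (hu : UniformContinuous f) :
    (memDL f ↔ ∃ K : ℝ, ∀ x y : ℝ, |f x - f y| ≤ K * |x - y|) ∧
    (memDL f ↔ memDL f ∧ memDL (-f)) := by
  have hiff : memDL f ↔ ∃ K : ℝ, ∀ x y : ℝ, |f x - f y| ≤ K * |x - y| := by
    constructor
    · exact memDL_lip f C hb
    · rintro ⟨K, hK⟩
      exact lip_memDL f K hK
  refine ⟨hiff, ?_⟩
  constructor
  · intro hf
    refine ⟨hf, ?_⟩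
    obtain ⟨K, hK⟩ := hiff.1 hf
    apply lip_memDL (-f) K
    intro x y
    have h1 : (-f) x - (-f) y = f y - f x := by simp [Pi.neg_apply]; ring
    rw [h1, abs_sub_comm]
    exact hK x y
  · exact fun h => h.1
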